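/- Let I ≥ 1, η : Fin I → ℝ, and T ⊆ (Fin I → ℝ) a set such that for all x', x'' ∈ T there is no c : Fin I → ℝ with 0 ≤ c i for all i, c·x' < c·η and c·x'' > c·η. Then at least one of the following holds: (a) η ≤ x for every x ∈ T; (b) x ≤ η for every x ∈ T; (c) there exists κ : Fin I → ℝ with κ i < 0 for some i and κ i > 0 for some i, such that T ⊆ {η + y • κ | y : ℝ, 0 ≤ y}. -/

import Mathlib

private lemma sum_one {I : ℕ} (k : Fin I) (α : ℝ) (x : Fin I → ℝ) :
    ∑ m, (if m = k then α else 0) * x m = α * x k := by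
  simp [ite_mul]

private lemma sum_two {I : ℕ} {p q : Fin I} (hpq : p ≠ q) (α β : ℝ) (x : Fin I → ℝ) :
    ∑ m, ((if m = p then α else 0) + (if m = q then β else 0)) * x m
      = α * x p + β * x q := by
  simp [add_mul, Finset.sum_add_distrib, ite_mul]

private lemma aux0 {w v : ℝ} (hv : 0 < v) : ∃ t : ℝ, 0 ≤ t ∧ 0 < w + t * v := by
  refine ⟨(1 + |w|) / v, by positivity, ?_⟩
  have h : (1 + |w|) / v * v = 1 + |w| := div_mul_cancel₀ _ hv.ne'
  rw [h]
  have := neg_abs_le w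
  linarith

private lemma ratio_eq {A B u v : ℝ} (hA : A < 0) (hB : 0 < B) (hu : u ≤ 0) (hv : 0 ≤ v)
    (h1 : ∀ α β : ℝ, 0 ≤ α → 0 ≤ β → α * A + β * B < 0 → α * u + β * v ≤ 0)
    (h2 : ∀ α β : ℝ, 0 ≤ α → 0 ≤ β → α * u + β * v < 0 → α * A + β * B ≤ 0) :
    A * v = B * u := by
  by_contra hne
  rcases lt_or_gt_of_ne hne with hlt | hgt
  · -- A*v < B*u
    have hv' : 0 < v := by nlinarith
    set ε := (B * u - A * v) / (2 * B) with hε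
    have hε' : 0 < ε := div_pos (by linarith) (by linarith)
    have hεB : ε * B = (B * u - A * v) / 2 := by
      rw [hε]; field_simp
    have h := h1 v (-u + ε) hv'.le (by linarith) (by nlinarith [hεB])
    nlinarith [h, mul_pos hε' hv']
  · -- B*u < A*v
    have hu' : u < 0 := by nlinarith
    set ε := (A * v - B * u) / (2 * (v + 1)) with hε
    have hε' : 0 < ε := div_pos (by linarith) (by linarith)
    have hεv : ε * v < A * v - B * u := by
      rw [hε, div_mul_eq_mul_div, div_lt_iff₀ (by linarith : (0:ℝ) < 2 * (v + 1))]
      nlinarith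
    have h := h2 B (-A + ε) hB.le (by linarith) (by nlinarith [hεv])
    nlinarith [h, mul_pos hε' hB]

/-- Claim 4 in the proof of Theorem 2: a trading set satisfying the OSP-derived
incentive condition lies entirely above the endowment, entirely below it, or on
a non-monotone ray originating at the endowment. -/
theorem stmt10 (I : ℕ) (hI : 1 ≤ I) (η : Fin I → ℝ) (T : Set (Fin I → ℝ))
    (hT : ∀ x' ∈ T, ∀ x'' ∈ T, ¬ ∃ c : Fin I → ℝ, (∀ i, 0 ≤ c i) ∧
      (∑ i, c i * x' i) < (∑ i, c i * η i) ∧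
      (∑ i, c i * η i) < ∑ i, c i * x'' i) :
    (∀ x ∈ T, η ≤ x) ∨ (∀ x ∈ T, x ≤ η) ∨
    (∃ κ : Fin I → ℝ, (∃ i, κ i < 0) ∧ (∃ i, 0 < κ i) ∧
      T ⊆ {x | ∃ y : ℝ, 0 ≤ y ∧ x = η + y • κ}) := by
  have key : ∀ u ∈ T, ∀ v ∈ T, ∀ c : Fin I → ℝ, (∀ i, 0 ≤ c i) →
      (∑ i, c i * u i) < (∑ i, c i * η i) → (∑ i, c i * v i) ≤ (∑ i, c i * η i) := by
    intro u hu v hv c hc hlt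
    by_contra h
    push_neg at h
    exact hT u hu v hv ⟨c, hc, hlt, h⟩
  by_cases hA : ∀ x ∈ T, η ≤ x
  · exact Or.inl hA
  by_cases hB : ∀ x ∈ T, x ≤ η
  · exact Or.inr (Or.inl hB)
  refine Or.inr (Or.inr ?_)
  push_neg at hA hB
  obtain ⟨a, haT, ha⟩ := hA
  obtain ⟨b, hbT, hb⟩ := hB
  rw [Pi.le_def] at ha hb
  push_neg at ha hb
  obtain ⟨i0, hi0⟩ := ha
  obtain ⟨j0, hj0⟩ := hb
  -- find a mixed element of T
  have hmix : ∃ x ∈ T, (∃ i, x i < η i) ∧ (∃ j, η j < x j) := by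
    by_cases hamix : ∃ j, η j < a j
    · exact ⟨a, haT, ⟨i0, hi0⟩, hamix⟩
    by_cases hbmix : ∃ i, b i < η i
    · exact ⟨b, hbT, hbmix, j0, hj0⟩
    push_neg at hamix hbmix
    exfalso
    have h1 : (∑ i, (1:ℝ) * a i) < ∑ i, (1:ℝ) * η i := by
      simp only [one_mul]
      exact Finset.sum_lt_sum (fun i _ => hamix i) ⟨i0, Finset.mem_univ _, hi0⟩
    have h2 : (∑ i, (1:ℝ) * η i) < ∑ i, (1:ℝ) * b i := by
      simp only [one_mul]
      exact Finset.sum_lt_sum (fun i _ => hbmix i) ⟨j0, Finset.mem_univ _, hj0⟩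
    exact hT a haT b hbT ⟨fun _ => 1, fun _ => zero_le_one, h1, h2⟩
  obtain ⟨x, hxT, ⟨i, hi⟩, ⟨j, hj⟩⟩ := hmix
  -- single-coordinate consequences
  have H1 : ∀ z ∈ T, ∀ k, x k < η k → z k ≤ η k := by
    intro z hz k hk
    have h := key x hxT z hz (fun m => if m = k then 1 else 0)
      (fun m => by split <;> norm_num)
      (by simpa [sum_one] using hk)
    simpa [sum_one] using h
  have H2 : ∀ z ∈ T, ∀ k, η k < x k → η k ≤ z k := by
    intro z hz k hk
    by_contra h
    push_neg at h
    have h2 := key z hz x hxT (fun m => if m = k then 1 else 0)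
      (fun m => by split <;> norm_num)
      (by simpa [sum_one] using h)
    simp only [sum_one] at h2
    linarith
  -- proportionality across a negative and a positive coordinate
  have P1 : ∀ z ∈ T, ∀ p q : Fin I, x p < η p → η q < x q →
      (x p - η p) * (z q - η q) = (x q - η q) * (z p - η p) := by
    intro z hz p q hp hq
    have hpq : p ≠ q := fun h => by rw [h] at hp; linarith
    refine ratio_eq (by linarith) (by linarith)
      (by have := H1 z hz p hp; linarith) (by have := H2 z hz q hq; linarith) ?_ ?_
    · intro α β hα hβ hlt
      have h := key x hxT z hz
        (fun m => (if m = p then α else 0) + (if m = q then β else 0))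
        (fun m => by split_ifs <;> linarith)
        (by simp only [sum_two hpq]; nlinarith [hlt])
      simp only [sum_two hpq] at h
      nlinarith [h]
    · intro α β hα hβ hlt
      have h := key z hz x hxT
        (fun m => (if m = p then α else 0) + (if m = q then β else 0))
        (fun m => by split_ifs <;> linarith)
        (by simp only [sum_two hpq]; nlinarith [hlt])
      simp only [sum_two hpq] at h
      nlinarith [h]
  -- coordinates where x agrees with η are fixed for all of T
  have P0 : ∀ z ∈ T, ∀ k, x k = η k → z k = η k := by
    intro z hz k hk
    by_contra hzk
    rcases lt_or_gt_of_ne hzk with hlt | hgt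
    · -- z k < η k : use coordinate j
      have hkj : j ≠ k := fun h => by rw [← h] at hk; linarith
      obtain ⟨t, ht, htpos⟩ := aux0 (w := η j - z j) (v := η k - z k) (by linarith)
      have h := key z hz x hxT
        (fun m => (if m = j then 1 else 0) + (if m = k then t else 0))
        (fun m => by split_ifs <;> linarith)
        (by simp only [sum_two hkj]; nlinarith [htpos])
      simp only [sum_two hkj] at h
      have hxk : t * x k = t * η k := by rw [hk]
      linarith
    · -- z k > η k : use coordinate i
      have hki : i ≠ k := fun h => by rw [← h] at hk; linarith
      obtain ⟨t, ht, htpos⟩ := aux0 (w := z i - η i) (v := z k - η k) (by linarith)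
      have hxk : t * x k = t * η k := by rw [hk]
      have h := key x hxT z hz
        (fun m => (if m = i then 1 else 0) + (if m = k then t else 0))
        (fun m => by split_ifs <;> linarith)
        (by simp only [sum_two hki]; linarith)
      simp only [sum_two hki] at h
      nlinarith [htpos]
  -- assemble the ray
  have hκj : (0:ℝ) < x j - η j := by linarith
  refine ⟨fun k => x k - η k, ⟨i, by simp; linarith⟩, ⟨j, by simp; linarith⟩, ?_⟩
  intro z hz
  have hyj : 0 ≤ z j - η j := by have := H2 z hz j hj; linarith
  refine ⟨(z j - η j) / (x j - η j), div_nonneg hyj hκj.le, ?_⟩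
  funext k
  have prop : (z k - η k) * (x j - η j) = (z j - η j) * (x k - η k) := by
    rcases lt_trichotomy (x k) (η k) with hk | hk | hk
    · have h := P1 z hz k j hk hj
      linear_combination -h
    · have h0 : z k = η k := P0 z hz k hk
      rw [h0, hk]; ring
    · have h1 := P1 z hz i k hi hk
      have h2 := P1 z hz i j hi hj
      have hAi : x i - η i ≠ 0 := sub_ne_zero.mpr (ne_of_lt hi)
      exact mul_left_cancel₀ hAi (by linear_combination (x j - η j) * h1 - (x k - η k) * h2)
  have hgoal : z k = η k + (z j - η j) / (x j - η j) * (x k - η k) := by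
    rw [div_mul_eq_mul_div, eq_comm, add_comm]
    rw [div_add' _ _ _ hκj.ne']
    rw [div_eq_iff hκj.ne']
    linear_combination -prop
  simpa [Pi.add_apply, Pi.smul_apply, smul_eq_mul] using hgoal
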